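/- Let G be a finite connected simple graph with a unique perfect matching. Then G has a bridge, i.e., G contains an edge whose deletion disconnects G. -/

import Mathlib

/-- `M` is a perfect matching of `G`, viewed as a set of edges: every edge of `M`
is an edge of `G`, and every vertex of `G` is incident to exactly one edge of `M`. -/
def SimpleGraph.IsPerfectMatchingOn {V : Type*} (G : SimpleGraph V) (M : Set (Sym2 V)) : Prop :=
  M ⊆ G.edgeSet ∧ ∀ v : V, ∃! e, e ∈ M ∧ v ∈ e

open SimpleGraph

namespace Kotzig

variable {V : Type*} {G : SimpleGraph V} {M : Set (Sym2 V)}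

/-- partner function of a matching given unique-partner property -/
noncomputable def ptn (hex : ∀ v : V, ∃! w : V, s(v,w) ∈ M) (v : V) : V :=
  (hex v).choose

lemma ptn_mem (hex : ∀ v : V, ∃! w : V, s(v,w) ∈ M) (v : V) :
    s(v, ptn hex v) ∈ M := (hex v).choose_spec.1

lemma ptn_eq (hex : ∀ v : V, ∃! w : V, s(v,w) ∈ M) {v w : V}
    (h : s(v,w) ∈ M) : w = ptn hex v := (hex v).choose_spec.2 w h

lemma ptn_adj (hex : ∀ v : V, ∃! w : V, s(v,w) ∈ M) (hsub : M ⊆ G.edgeSet) (v : V) :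
    G.Adj v (ptn hex v) := (mem_edgeSet G).mp (hsub (ptn_mem hex v))

lemma ptn_ne (hex : ∀ v : V, ∃! w : V, s(v,w) ∈ M) (hsub : M ⊆ G.edgeSet) (v : V) :
    ptn hex v ≠ v := (ptn_adj hex hsub v).ne'

lemma ptn_ptn (hex : ∀ v : V, ∃! w : V, s(v,w) ∈ M) (v : V) :
    ptn hex (ptn hex v) = v := by
  have : s(ptn hex v, v) ∈ M := by rw [Sym2.eq_swap]; exact ptn_mem hex v
  exact (ptn_eq hex this).symm

lemma edge_eq (hex : ∀ v : V, ∃! w : V, s(v,w) ∈ M) {e : Sym2 V} {v : V}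
    (he : e ∈ M) (hv : v ∈ e) : e = s(v, ptn hex v) := by
  obtain ⟨w, rfl⟩ := Sym2.mem_iff_exists.mp hv
  rw [ptn_eq hex he]

lemma hex_of (hM : G.IsPerfectMatchingOn M) : ∀ v : V, ∃! w : V, s(v,w) ∈ M := by
  intro v
  obtain ⟨e, ⟨heM, hve⟩, hu⟩ := hM.2 v
  obtain ⟨w, rfl⟩ := Sym2.mem_iff_exists.mp hve
  refine ⟨w, heM, fun y hy => ?_⟩
  have := hu s(v,y) ⟨hy, Sym2.mem_mk_left v y⟩
  exact Sym2.congr_right.mp this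

lemma pm_intro (hsub : M ⊆ G.edgeSet) (hex : ∀ v : V, ∃! w : V, s(v,w) ∈ M) :
    G.IsPerfectMatchingOn M := by
  refine ⟨hsub, fun v => ⟨s(v, ptn hex v), ⟨ptn_mem hex v, Sym2.mem_mk_left _ _⟩, ?_⟩⟩
  rintro e ⟨heM, hve⟩
  exact edge_eq hex heM hve

/-- matchings with one contained in the other are equal -/
lemma pm_eq_of_subset {N : Set (Sym2 V)}
    (hNex : ∀ v : V, ∃! w : V, s(v,w) ∈ N)
    (hMu : ∀ v : V, ∃! w : V, s(v,w) ∈ M)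
    (hsub : N ⊆ M) : N = M := by
  refine Set.Subset.antisymm hsub fun e he => ?_
  induction e using Sym2.ind with
  | _ x y =>
    have h1 : s(x, ptn hNex x) ∈ N := ptn_mem hNex x
    have h2 : s(x, ptn hNex x) ∈ M := hsub h1
    have : y = ptn hNex x := by
      rw [ptn_eq hMu h2] at *
      exact ptn_eq hMu he
    rw [this]; exact h1

/-- An alternating cycle (given by explicit indexing) contradicts uniqueness of the
perfect matching. -/
lemma flip (hsub : M ⊆ G.edgeSet) (hex : ∀ v : V, ∃! w : V, s(v,w) ∈ M)
    (huniq : ∀ M' : Set (Sym2 V), G.IsPerfectMatchingOn M' → M' = M)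
    (q : ℕ) (hq : 1 ≤ q) (a b : ℕ → V)
    (hab : ∀ i, i ≤ q → s(a i, b i) ∈ M)
    (hba : ∀ i, i < q → G.Adj (b i) (a (i+1)))
    (hwrap : G.Adj (b q) (a 0))
    (hdisj : ∀ i, i ≤ q → ∀ j, j ≤ q → a i ≠ b j)
    (hainj : ∀ i, i ≤ q → ∀ j, j ≤ q → a i = a j → i = j)
    (hbinj : ∀ i, i ≤ q → ∀ j, j ≤ q → b i = b j → i = j) : False := by
  classical
  set A : Set (Sym2 V) := {e | ∃ i, i ≤ q ∧ e = s(a i, b i)} with hA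
  set Bs : Set (Sym2 V) := {e | (∃ i, i < q ∧ e = s(b i, a (i+1))) ∨ e = s(b q, a 0)} with hBs
  set M'' : Set (Sym2 V) := (M \ A) ∪ Bs with hM''
  have hptna : ∀ i, i ≤ q → ptn hex (a i) = b i := fun i hi => (ptn_eq hex (hab i hi)).symm
  have hptnb : ∀ i, i ≤ q → ptn hex (b i) = a i := by
    intro i hi
    have : s(b i, a i) ∈ M := by rw [Sym2.eq_swap]; exact hab i hi
    exact (ptn_eq hex this).symm
  -- M'' is a perfect matching
  have hsub'' : M'' ⊆ G.edgeSet := by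
    rintro e (⟨heM, -⟩ | he)
    · exact hsub heM
    · rcases he with ⟨i, hi, rfl⟩ | rfl
      · exact (hba i hi)
      · exact hwrap
  have hex'' : ∀ v : V, ∃! w : V, s(v,w) ∈ M'' := by
    intro v
    by_cases hva : ∃ t, t ≤ q ∧ v = a t
    · obtain ⟨t, ht, rfl⟩ := hva
      refine ⟨if t = 0 then b q else b (t-1), ?_, ?_⟩
      · by_cases h0 : t = 0
        · subst h0
          right; right; rw [if_pos rfl, Sym2.eq_swap]
        · rw [if_neg h0]
          right; left
          refine ⟨t-1, by omega, ?_⟩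
          have h5 : t - 1 + 1 = t := by omega
          rw [h5, Sym2.eq_swap]
      · intro w hw
        rcases hw with ⟨hwM, hwA⟩ | hw
        · exfalso
          exact hwA ⟨t, ht, by rw [ptn_eq hex hwM, hptna t ht]⟩
        · rcases hw with ⟨i, hi, hEq⟩ | hEq
          · rcases Sym2.eq_iff.mp hEq with ⟨h1, h2⟩ | ⟨h1, h2⟩
            · exact absurd h1 (hdisj t ht i (by omega))
            · have : t = i + 1 := hainj t ht (i+1) (by omega) h1
              rw [if_neg (by omega), h2]; congr 1; omega
          · rcases Sym2.eq_iff.mp hEq with ⟨h1, h2⟩ | ⟨h1, h2⟩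
            · exact absurd h1 (hdisj t ht q le_rfl)
            · have : t = 0 := hainj t ht 0 (by omega) h1
              rw [if_pos this, h2]
    · by_cases hvb : ∃ t, t ≤ q ∧ v = b t
      · obtain ⟨t, ht, rfl⟩ := hvb
        refine ⟨if t = q then a 0 else a (t+1), ?_, ?_⟩
        · by_cases h0 : t = q
          · subst h0
            right; right; rw [if_pos rfl]
          · rw [if_neg h0]
            right; left; exact ⟨t, by omega, rfl⟩
        · intro w hw
          rcases hw with ⟨hwM, hwA⟩ | hw
          · exfalso
            exact hwA ⟨t, ht, by rw [ptn_eq hex hwM, hptnb t ht, Sym2.eq_swap]⟩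
          · rcases hw with ⟨i, hi, hEq⟩ | hEq
            · rcases Sym2.eq_iff.mp hEq with ⟨h1, h2⟩ | ⟨h1, h2⟩
              · have : t = i := hbinj t ht i (by omega) h1
                subst this
                rw [if_neg (by omega), h2]
              · exact absurd h1.symm (hdisj (i+1) (by omega) t ht)
            · rcases Sym2.eq_iff.mp hEq with ⟨h1, h2⟩ | ⟨h1, h2⟩
              · have : t = q := hbinj t ht q le_rfl h1
                rw [if_pos this, h2]
              · exact absurd h1.symm (hdisj 0 (by omega) t ht)
      · refine ⟨ptn hex v, Or.inl ⟨ptn_mem hex v, ?_⟩, ?_⟩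
        · rintro ⟨i, hi, hEq⟩
          rcases Sym2.eq_iff.mp hEq with ⟨h1, -⟩ | ⟨h1, -⟩
          · exact hva ⟨i, hi, h1⟩
          · exact hvb ⟨i, hi, h1⟩
        · intro w hw
          rcases hw with ⟨hwM, -⟩ | hw
          · exact ptn_eq hex hwM
          · exfalso
            rcases hw with ⟨i, hi, hEq⟩ | hEq
            · rcases Sym2.eq_iff.mp hEq with ⟨h1, -⟩ | ⟨h1, -⟩
              · exact hvb ⟨i, by omega, h1⟩
              · exact hva ⟨i+1, by omega, h1⟩
            · rcases Sym2.eq_iff.mp hEq with ⟨h1, -⟩ | ⟨h1, -⟩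
              · exact hvb ⟨q, le_rfl, h1⟩
              · exact hva ⟨0, by omega, h1⟩
  have hMeq : M'' = M := huniq M'' (pm_intro hsub'' hex'')
  -- but s(b 0, a 1) ∈ M'' and ∉ M
  have hmem : s(b 0, a 1) ∈ M'' := Or.inr (Or.inl ⟨0, by omega, rfl⟩)
  rw [hMeq] at hmem
  have : a 1 = ptn hex (b 0) := ptn_eq hex hmem
  rw [hptnb 0 (by omega)] at this
  exact absurd (hainj 1 (by omega) 0 (by omega) this) (by omega)


section AltPath

variable (G) in
/-- An alternating path `f 0, f 1, ..., f (2k+1)` starting and ending with matching edges. -/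
def IsAltPath (hex : ∀ v : V, ∃! w : V, s(v,w) ∈ M) (k : ℕ) (f : ℕ → V) : Prop :=
  (∀ i, i ≤ 2*k+1 → ∀ j, j ≤ 2*k+1 → f i = f j → i = j) ∧
  (∀ i, i < 2*k+1 → G.Adj (f i) (f (i+1))) ∧
  (∀ i, 2*i+1 ≤ 2*k+1 → f (2*i+1) = ptn hex (f (2*i)))

variable {hex : ∀ v : V, ∃! w : V, s(v,w) ∈ M} {k : ℕ} {f : ℕ → V}

lemma altpath_mat (h : IsAltPath G hex k f) {i : ℕ} (hi : 2*i+1 ≤ 2*k+1) :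
    s(f (2*i), f (2*i+1)) ∈ M := by
  rw [h.2.2 i hi]; exact ptn_mem hex (f (2*i))

lemma altpath_ptn_range (h : IsAltPath G hex k f) {j : ℕ} (hj : j ≤ 2*k+1) :
    ∃ j', j' ≤ 2*k+1 ∧ ptn hex (f j) = f j' := by
  rcases Nat.even_or_odd j with ⟨i, hi⟩ | ⟨i, hi⟩
  · refine ⟨j+1, by omega, ?_⟩
    have := h.2.2 i (by omega)
    rw [show 2*i = j by omega] at this
    exact this.symm
  · refine ⟨j-1, by omega, ?_⟩
    have := h.2.2 i (by omega)
    rw [show 2*i = j - 1 by omega, show j - 1 + 1 = j by omega] at this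
    rw [this, ptn_ptn]

lemma altpath_card [Fintype V] (h : IsAltPath G hex k f) : 2*k+2 ≤ Fintype.card V := by
  have hinj : Function.Injective (fun i : Fin (2*k+2) => f i.val) := by
    intro i j hij
    exact Fin.ext (h.1 i.val (by omega) j.val (by omega) hij)
  simpa using Fintype.card_le_of_injective _ hinj

lemma altpath_exists [Nonempty V] (hsub : M ⊆ G.edgeSet) :
    ∃ f, IsAltPath G hex 0 f := by
  classical
  obtain ⟨v⟩ := ‹Nonempty V›
  refine ⟨fun i => if i = 0 then v else ptn hex v, ?_, ?_, ?_⟩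
  · intro i hi j hj hij
    interval_cases i <;> interval_cases j <;> simp_all
    · exact absurd hij.symm (ptn_ne hex hsub v)
    · exact absurd hij (ptn_ne hex hsub v)
  · intro i hi
    interval_cases i
    simpa using ptn_adj hex hsub v
  · intro i hi
    have : i = 0 := by omega
    subst this
    simp

lemma altpath_extend (hsub : M ⊆ G.edgeSet) (h : IsAltPath G hex k f) {w : V}
    (hadj : G.Adj (f 0) w) (hw : ∀ j, j ≤ 2*k+1 → w ≠ f j) :
    ∃ g, IsAltPath G hex (k+1) g := by
  classical
  have hpw : ∀ j, j ≤ 2*k+1 → ptn hex w ≠ f j := by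
    intro j hj heq
    obtain ⟨j', hj', hj'eq⟩ := altpath_ptn_range h hj
    exact hw j' hj' (by rw [← ptn_ptn hex w, heq, hj'eq])
  set g : ℕ → V := fun i => if i = 0 then ptn hex w else if i = 1 then w else f (i-2) with hgdef
  have hg0 : g 0 = ptn hex w := rfl
  have hg1 : g 1 = w := rfl
  have hgk : ∀ i, 2 ≤ i → g i = f (i-2) := by
    intro i h2
    show (if i = 0 then ptn hex w else if i = 1 then w else f (i-2)) = f (i-2)
    rw [if_neg (by omega), if_neg (by omega)]
  refine ⟨g, ?_, ?_, ?_⟩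
  · intro i hi j hj hij
    by_cases hi0 : i = 0
    · subst hi0
      by_cases hj0 : j = 0
      · omega
      · by_cases hj1 : j = 1
        · rw [hg0, hj1, hg1] at hij
          exact absurd hij (ptn_ne hex hsub w)
        · rw [hg0, hgk j (by omega)] at hij
          exact absurd hij (hpw (j-2) (by omega))
    · by_cases hi1 : i = 1
      · subst hi1
        by_cases hj0 : j = 0
        · rw [hg1, hj0, hg0] at hij
          exact absurd hij.symm (fun hh => (ptn_ne hex hsub w) hh)
        · by_cases hj1 : j = 1
          · omega
          · rw [hg1, hgk j (by omega)] at hij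
            exact absurd hij (hw (j-2) (by omega))
      · by_cases hj0 : j = 0
        · rw [hgk i (by omega), hj0, hg0] at hij
          exact absurd hij.symm (hpw (i-2) (by omega))
        · by_cases hj1 : j = 1
          · rw [hgk i (by omega), hj1, hg1] at hij
            exact absurd hij.symm (hw (i-2) (by omega))
          · rw [hgk i (by omega), hgk j (by omega)] at hij
            have := h.1 (i-2) (by omega) (j-2) (by omega) hij
            omega
  · intro i hi
    by_cases hi0 : i = 0
    · subst hi0
      rw [hg0, hg1]
      exact (ptn_adj hex hsub w).symm
    · by_cases hi1 : i = 1
      · subst hi1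
        rw [hg1, hgk 2 le_rfl]
        exact hadj.symm
      · rw [hgk i (by omega), hgk (i+1) (by omega)]
        have := h.2.1 (i-2) (by omega)
        rw [show i - 2 + 1 = i + 1 - 2 by omega] at this
        exact this
  · intro i hi
    by_cases hi0 : i = 0
    · subst hi0
      show g 1 = ptn hex (g 0)
      rw [hg0, hg1, ptn_ptn]
    · rw [hgk (2*i+1) (by omega), hgk (2*i) (by omega)]
      have := h.2.2 (i-1) (by omega)
      rw [show 2*(i-1) = 2*i - 2 by omega, show 2*i-2+1 = 2*i+1-2 by omega] at this
      exact this

lemma altpath_mat' (h : IsAltPath G hex k f) {x : ℕ} (hx : x % 2 = 0) (hx2 : x+1 ≤ 2*k+1) :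
    s(f x, f (x+1)) ∈ M := by
  obtain ⟨i, rfl⟩ : ∃ i, x = 2*i := ⟨x/2, by omega⟩
  exact altpath_mat h (by omega)

lemma altpath_adj' (h : IsAltPath G hex k f) {x : ℕ} (hx2 : x+1 ≤ 2*k+1) :
    G.Adj (f x) (f (x+1)) := h.2.1 x (by omega)

/-- A chord from an even-index vertex to a later odd-index vertex yields an alternating
cycle, contradicting uniqueness. -/
lemma chordC (hsub : M ⊆ G.edgeSet)
    (huniq : ∀ M' : Set (Sym2 V), G.IsPerfectMatchingOn M' → M' = M)
    (h : IsAltPath G hex k f) {p s : ℕ}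
    (h1 : p + 3 ≤ s) (h2 : s ≤ 2*k+1) (hp : p % 2 = 0) (hs : s % 2 = 1)
    (hadj : G.Adj (f s) (f p)) : False := by
  refine flip hsub hex huniq ((s-p-1)/2) (by omega)
    (fun i => f (p + 2*i)) (fun i => f (p + 2*i + 1)) ?_ ?_ ?_ ?_ ?_ ?_
  · intro i hi
    exact altpath_mat' h (by omega) (by omega)
  · intro i hi
    beta_reduce
    have := altpath_adj' h (x := p + 2*i + 1) (by omega)
    rw [show p + 2*(i+1) = p + 2*i + 1 + 1 by omega]
    exact this
  · beta_reduce
    rw [show p + 2*((s-p-1)/2) + 1 = s by omega, show p + 2*0 = p by omega]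
    exact hadj
  · intro i hi j hj heq
    beta_reduce at heq
    have := h.1 _ (by omega) _ (by omega) heq
    omega
  · intro i hi j hj heq
    beta_reduce at heq
    have := h.1 _ (by omega) _ (by omega) heq
    omega
  · intro i hi j hj heq
    beta_reduce at heq
    have := h.1 _ (by omega) _ (by omega) heq
    omega

/-- The second chord configuration: `f 0 ~ f t` (t even) and `f (t+1) ~ f r` (r odd, r < t)
yields an alternating cycle, contradicting uniqueness. -/
lemma chordD (hsub : M ⊆ G.edgeSet)
    (huniq : ∀ M' : Set (Sym2 V), G.IsPerfectMatchingOn M' → M' = M)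
    (h : IsAltPath G hex k f) {t r : ℕ}
    (hr : r % 2 = 1) (hrt : r + 1 ≤ t) (ht : t % 2 = 0) (htk : t + 1 ≤ 2*k+1)
    (hchord : G.Adj (f 0) (f t)) (hadj2 : G.Adj (f (t+1)) (f r)) : False := by
  refine flip hsub hex huniq ((r+1)/2) (by omega)
    (fun i => if i = 0 then f t else f (r + 2 - 2*i))
    (fun i => if i = 0 then f (t+1) else f (r + 1 - 2*i)) ?_ ?_ ?_ ?_ ?_ ?_
  · intro i hi
    beta_reduce
    by_cases h0 : i = 0
    · subst h0
      simpa using altpath_mat' h ht htk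
    · rw [if_neg h0, if_neg h0]
      have hm := altpath_mat' h (x := r + 1 - 2*i) (by omega) (by omega)
      rw [show r + 1 - 2*i + 1 = r + 2 - 2*i by omega] at hm
      rw [Sym2.eq_swap]
      exact hm
  · intro i hi
    beta_reduce
    by_cases h0 : i = 0
    · subst h0
      simp only [if_pos rfl, if_neg (by omega : ¬(0+1 = 0))]
      rw [show r + 2 - 2*(0+1) = r by omega]
      exact hadj2
    · rw [if_neg h0, if_neg (by omega : ¬(i+1 = 0))]
      have := (altpath_adj' h (x := r - 2*i) (by omega)).symm
      rw [show r - 2*i + 1 = r + 1 - 2*i by omega, show r - 2*i = r + 2 - 2*(i+1) by omega] at this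
      exact this
  · beta_reduce
    rw [if_neg (by omega : ¬((r+1)/2 = 0)), if_pos rfl]
    rw [show r + 1 - 2*((r+1)/2) = 0 by omega]
    exact hchord
  · -- a i ≠ b j
    intro i hi j hj heq
    beta_reduce at heq
    by_cases h0 : i = 0 <;> by_cases h1 : j = 0
    · rw [if_pos h0, if_pos h1] at heq
      have := h.1 _ (by omega) _ (by omega) heq
      omega
    · rw [if_pos h0, if_neg h1] at heq
      have := h.1 _ (by omega) _ (by omega) heq
      omega
    · rw [if_neg h0, if_pos h1] at heq
      have := h.1 _ (by omega) _ (by omega) heq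
      omega
    · rw [if_neg h0, if_neg h1] at heq
      have := h.1 _ (by omega) _ (by omega) heq
      omega
  · intro i hi j hj heq
    beta_reduce at heq
    by_cases h0 : i = 0 <;> by_cases h1 : j = 0
    · omega
    · rw [if_pos h0, if_neg h1] at heq
      have := h.1 _ (by omega) _ (by omega) heq
      omega
    · rw [if_neg h0, if_pos h1] at heq
      have := h.1 _ (by omega) _ (by omega) heq
      omega
    · rw [if_neg h0, if_neg h1] at heq
      have := h.1 _ (by omega) _ (by omega) heq
      omega
  · intro i hi j hj heq
    beta_reduce at heq
    by_cases h0 : i = 0 <;> by_cases h1 : j = 0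
    · omega
    · rw [if_pos h0, if_neg h1] at heq
      have := h.1 _ (by omega) _ (by omega) heq
      omega
    · rw [if_neg h0, if_pos h1] at heq
      have := h.1 _ (by omega) _ (by omega) heq
      omega
    · rw [if_neg h0, if_neg h1] at heq
      have := h.1 _ (by omega) _ (by omega) heq
      omega

end AltPath

section Bridge

lemma pendant_bridge {u x : V} (hadj : G.Adj u x)
    (hnb : ∀ w, G.Adj u w → w = x) : G.IsBridge s(u, x) := by
  rw [SimpleGraph.isBridge_iff]
  intro hreach
  obtain ⟨p⟩ := hreach
  cases p with
  | nil => exact hadj.ne rfl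
  | cons h q =>
    rw [SimpleGraph.deleteEdges_adj] at h
    have hyx := hnb _ h.1
    subst hyx
    exact h.2 rfl

end Bridge

section Contract

variable {K : Set V} [DecidablePred (· ∈ K)]

/-- Projection collapsing `K` to the representative `b`. -/
def proj (K : Set V) [DecidablePred (· ∈ K)] (b : {v : V // v ∉ K}) (v : V) :
    {v : V // v ∉ K} :=
  if h : v ∈ K then b else ⟨v, h⟩

variable (G) in
/-- The contraction of `G` collapsing `K` to `b`. -/
def CG (K : Set V) [DecidablePred (· ∈ K)] (b : {v : V // v ∉ K}) :
    SimpleGraph {v : V // v ∉ K} where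
  Adj x y := x ≠ y ∧ ∃ u v : V, G.Adj u v ∧ proj K b u = x ∧ proj K b v = y
  symm := ⟨by
    rintro x y ⟨hne, u, v, huv, hu, hv⟩
    exact ⟨hne.symm, v, u, huv.symm, hv, hu⟩⟩
  loopless := ⟨fun x h => h.1 rfl⟩

lemma proj_not_mem {b : {v : V // v ∉ K}} {v : V} (h : v ∉ K) : proj K b v = ⟨v, h⟩ :=
  dif_neg h

lemma proj_mem {b : {v : V // v ∉ K}} {v : V} (h : v ∈ K) : proj K b v = b :=
  dif_pos h

lemma proj_val {b : {v : V // v ∉ K}} (x : {v : V // v ∉ K}) : proj K b x.1 = x := by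
  rw [proj_not_mem x.2]

lemma proj_eq_of_ne {b x : {v : V // v ∉ K}} {u : V} (h : proj K b u = x) (hx : x ≠ b) :
    u = x.1 ∧ u ∉ K := by
  by_cases hu : u ∈ K
  · rw [proj_mem hu] at h
    exact absurd h.symm hx
  · rw [proj_not_mem hu] at h
    exact ⟨congrArg Subtype.val h.symm ▸ rfl, hu⟩

lemma CG_adj {b x y : {v : V // v ∉ K}} :
    (CG G K b).Adj x y ↔ x ≠ y ∧ ∃ u v : V, G.Adj u v ∧ proj K b u = x ∧ proj K b v = y :=
  Iff.rfl

lemma CG_reachable {b : {v : V // v ∉ K}} {u v : V} (h : G.Reachable u v) :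
    (CG G K b).Reachable (proj K b u) (proj K b v) := by
  obtain ⟨p⟩ := h
  induction p with
  | nil => exact SimpleGraph.Reachable.refl _
  | cons hadj p ih =>
    refine SimpleGraph.Reachable.trans ?_ ih
    rename_i a c d
    by_cases he : proj K b a = proj K b c
    · rw [he]
    · exact SimpleGraph.Adj.reachable ⟨he, a, c, hadj, rfl, rfl⟩

lemma CG_reachable_avoid {b : {v : V // v ∉ K}} {x0 y0 : V}
    (hpre : ∀ u v : V, G.Adj u v → s(u,v) ≠ s(x0,y0) →
      s(proj K b u, proj K b v) ≠ s(proj K b x0, proj K b y0))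
    {u v : V} (h : (G \ SimpleGraph.fromEdgeSet {s(x0,y0)}).Reachable u v) :
    ((CG G K b) \ SimpleGraph.fromEdgeSet {s(proj K b x0, proj K b y0)}).Reachable
      (proj K b u) (proj K b v) := by
  obtain ⟨p⟩ := h
  induction p with
  | nil => exact SimpleGraph.Reachable.refl _
  | cons hadj p ih =>
    refine SimpleGraph.Reachable.trans ?_ ih
    rename_i a c d
    rw [SimpleGraph.sdiff_adj, SimpleGraph.fromEdgeSet_adj] at hadj
    have hne : s(a,c) ≠ s(x0,y0) := by
      intro hcon
      exact hadj.2 ⟨hcon ▸ rfl, hadj.1.ne⟩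
    by_cases he : proj K b a = proj K b c
    · rw [he]
    · refine SimpleGraph.Adj.reachable ?_
      rw [SimpleGraph.sdiff_adj, SimpleGraph.fromEdgeSet_adj]
      exact ⟨⟨he, a, c, hadj.1, rfl, rfl⟩, fun hcon =>
        hpre a c hadj.1 hne (hcon.1 ▸ rfl)⟩

lemma bridge_lift {b : {v : V // v ∉ K}} {x0 y0 : V} (hadj : G.Adj x0 y0)
    (hbridge : (CG G K b).IsBridge s(proj K b x0, proj K b y0))
    (hpre : ∀ u v : V, G.Adj u v → s(u,v) ≠ s(x0,y0) →
      s(proj K b u, proj K b v) ≠ s(proj K b x0, proj K b y0)) :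
    G.IsBridge s(x0, y0) := by
  rw [SimpleGraph.isBridge_iff]
  intro hr
  exact (SimpleGraph.isBridge_iff.mp hbridge) (CG_reachable_avoid hpre hr)

end Contract

section Hard

variable [Fintype V]

lemma hard_case {k t : ℕ} {f : ℕ → V}
    (hsub : M ⊆ G.edgeSet) (hex : ∀ v : V, ∃! w : V, s(v,w) ∈ M)
    (huniq : ∀ M' : Set (Sym2 V), G.IsPerfectMatchingOn M' → M' = M)
    (hG : G.Connected)
    (hpath : IsAltPath G hex k f)
    (ht2 : 2 ≤ t) (hteven : t % 2 = 0) (htk : t + 1 ≤ 2*k+1)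
    (hchord : G.Adj (f 0) (f t))
    (hnopre : ∀ r, r ≤ t → r ≠ t → ¬ G.Adj (f r) (f (t+1)))
    (IH : ∀ (W : Type u_1) [Fintype W] (G' : SimpleGraph W) (M'' : Set (Sym2 W)),
      G'.Connected → G'.IsPerfectMatchingOn M'' →
      (∀ N, G'.IsPerfectMatchingOn N → N = M'') →
      Fintype.card W < Fintype.card V → ∃ e ∈ M'', G'.IsBridge e) :
    ∃ e ∈ M, G.IsBridge e := by
  classical
  have hinj := hpath.1
  have hfne : ∀ i, i ≤ 2*k+1 → ∀ j, j ≤ 2*k+1 → i ≠ j → f i ≠ f j := by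
    intro i hi j hj hij heq
    exact hij (hinj i hi j hj heq)
  have hptnf : ∀ j, j ≤ 2*k → j % 2 = 0 → ptn hex (f j) = f (j+1) := by
    intro j hj hj2
    obtain ⟨i, rfl⟩ : ∃ i, j = 2*i := ⟨j/2, by omega⟩
    exact (hpath.2.2 i (by omega)).symm
  have hptnf' : ∀ j, j ≤ 2*k+1 → j % 2 = 1 → ptn hex (f j) = f (j-1) := by
    intro j hj hj2
    obtain ⟨i, hieq⟩ : ∃ i, j = 2*i+1 := ⟨j/2, by omega⟩
    have h1 := hpath.2.2 i (by omega)
    rw [← hieq] at h1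
    rw [h1, ptn_ptn]
    congr 1
    omega
  set K : Set V := {v | ∃ j, 1 ≤ j ∧ j ≤ t ∧ v = f j} with hK
  have hf0K : f 0 ∉ K := by
    rintro ⟨j, hj1, hjt, hjeq⟩
    exact hfne 0 (by omega) j (by omega) (by omega) hjeq
  have hft1K : f (t+1) ∉ K := by
    rintro ⟨j, hj1, hjt, hjeq⟩
    exact hfne (t+1) (by omega) j (by omega) (by omega) hjeq
  set b : {v : V // v ∉ K} := ⟨f 0, hf0K⟩ with hbdef
  set ws : {v : V // v ∉ K} := ⟨f (t+1), hft1K⟩ with hwsdef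
  have hbws : b ≠ ws := by
    intro hcon
    exact hfne 0 (by omega) (t+1) (by omega) (by omega) (congrArg Subtype.val hcon)
  have hmemK : ∀ j, 1 ≤ j → j ≤ t → f j ∈ K := fun j h1 h2 => ⟨j, h1, h2, rfl⟩
  have hprojb : ∀ v : V, proj K b v = b → ∃ j, j ≤ t ∧ v = f j := by
    intro v hv
    by_cases h : v ∈ K
    · obtain ⟨j, hj1, hjt, hjeq⟩ := h
      exact ⟨j, hjt, hjeq⟩
    · rw [proj_not_mem h] at hv
      exact ⟨0, by omega, congrArg Subtype.val hv⟩
  -- the contracted matching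
  set M' : Set (Sym2 {v : V // v ∉ K}) := insert s(b, ws)
    {e' | ∃ x y : {v : V // v ∉ K}, s(x.1, y.1) ∈ M ∧ (∀ j, j ≤ t+1 → x.1 ≠ f j) ∧
      (∀ j, j ≤ t+1 → y.1 ≠ f j) ∧ e' = s(x,y)} with hM'def
  have hex' : ∀ x : {v : V // v ∉ K}, ∃! y, s(x, y) ∈ M' := by
    intro x
    by_cases hxb : x = b
    · subst hxb
      refine ⟨ws, Set.mem_insert _ _, ?_⟩
      intro y hy
      rcases Set.mem_insert_iff.mp hy with h | ⟨x', y', hMm, hx', hy', heq⟩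
      · rcases Sym2.eq_iff.mp h with ⟨-, h2⟩ | ⟨h1, -⟩
        · exact h2
        · exact absurd h1 hbws
      · exfalso
        rcases Sym2.eq_iff.mp heq with ⟨h1, -⟩ | ⟨h1, -⟩
        · exact hx' 0 (by omega) (congrArg Subtype.val h1).symm
        · exact hy' 0 (by omega) (congrArg Subtype.val h1).symm
    · by_cases hxw : x = ws
      · subst hxw
        refine ⟨b, Set.mem_insert_iff.mpr (Or.inl Sym2.eq_swap), ?_⟩
        intro y hy
        rcases Set.mem_insert_iff.mp hy with h | ⟨x', y', hMm, hx', hy', heq⟩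
        · rcases Sym2.eq_iff.mp h with ⟨h1, -⟩ | ⟨-, h2⟩
          · exact absurd h1.symm hbws
          · exact h2
        · exfalso
          rcases Sym2.eq_iff.mp heq with ⟨h1, -⟩ | ⟨h1, -⟩
          · exact hx' (t+1) le_rfl (congrArg Subtype.val h1).symm
          · exact hy' (t+1) le_rfl (congrArg Subtype.val h1).symm
      · have hx1 : ∀ j, j ≤ t+1 → x.1 ≠ f j := by
          intro j hj heq
          rcases Nat.lt_or_ge j 1 with h | h
          · exact hxb (Subtype.ext (by rw [heq, show j = 0 by omega]))
          · rcases Nat.lt_or_ge j (t+1) with h' | h'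
            · exact x.2 (heq ▸ hmemK j h (by omega))
            · exact hxw (Subtype.ext (by rw [heq, show j = t+1 by omega]))
        have hpx : ∀ j, j ≤ t+1 → ptn hex x.1 ≠ f j := by
          intro j hj heq
          have hx1p : x.1 = ptn hex (f j) := by rw [← heq, ptn_ptn]
          by_cases hj2 : j % 2 = 0
          · rw [hptnf j (by omega) hj2] at hx1p
            exact hx1 (j+1) (by omega) hx1p
          · rw [hptnf' j (by omega) (by omega)] at hx1p
            exact hx1 (j-1) (by omega) hx1p
        have hpK : ptn hex x.1 ∉ K := by
          rintro ⟨j, hj1, hjt, hjeq⟩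
          exact hpx j (by omega) hjeq
        refine ⟨⟨ptn hex x.1, hpK⟩,
          Set.mem_insert_iff.mpr (Or.inr ⟨x, ⟨ptn hex x.1, hpK⟩, ptn_mem hex x.1, hx1, hpx, rfl⟩), ?_⟩
        intro y hy
        rcases Set.mem_insert_iff.mp hy with h | ⟨x', y', hMm, hx', hy', heq⟩
        · exfalso
          rcases Sym2.eq_iff.mp h with ⟨h1, -⟩ | ⟨h1, -⟩
          · exact hxb h1
          · exact hxw h1
        · have hM2 : s(x.1, y.1) ∈ M := by
            rcases Sym2.eq_iff.mp heq with ⟨h1, h2⟩ | ⟨h1, h2⟩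
            · rw [← h1, ← h2] at hMm
              exact hMm
            · rw [← h1, ← h2] at hMm
              rw [Sym2.eq_swap]
              exact hMm
          exact Subtype.ext (ptn_eq hex hM2)
  have hsub' : M' ⊆ (CG G K b).edgeSet := by
    intro e he
    rcases Set.mem_insert_iff.mp he with rfl | ⟨x, y, hMm, hx', hy', rfl⟩
    · refine ((CG G K b).mem_edgeSet).mpr ?_
      refine ⟨hbws, f t, f (t+1), altpath_adj' hpath htk, ?_, ?_⟩
      · rw [proj_mem (hmemK t (by omega) le_rfl)]
      · rw [proj_not_mem hft1K]
    · have hadjxy : G.Adj x.1 y.1 := (G.mem_edgeSet).mp (hsub hMm)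
      refine ((CG G K b).mem_edgeSet).mpr ?_
      exact ⟨fun hcon => hadjxy.ne (congrArg Subtype.val hcon), x.1, y.1, hadjxy, proj_val x, proj_val y⟩
  have hM'pm : (CG G K b).IsPerfectMatchingOn M' := pm_intro hsub' hex'
  have hblossom_ne : ∀ (x : {v : V // v ∉ K}), x ≠ b → ∀ j, j ≤ t → x.1 ≠ f j := by
    intro x hxb j hj heq
    rcases Nat.lt_or_ge j 1 with h | h
    · exact hxb (Subtype.ext (by rw [heq, show j = 0 by omega]))
    · exact x.2 (heq ▸ hmemK j h hj)
  have hM'uniq : ∀ N', (CG G K b).IsPerfectMatchingOn N' → N' = M' := by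
    intro N' hN'
    have hexN := hex_of hN'
    have hsubN := hN'.1
    have hcb : s(b, ptn hexN b) ∈ N' := ptn_mem hexN b
    have hcnb : ptn hexN b ≠ b := ptn_ne hexN hsubN b
    set c : {v : V // v ∉ K} := ptn hexN b with hcdef
    obtain ⟨-, u0, v0, huv0, hu0, hv0⟩ := CG_adj.mp (((CG G K b).mem_edgeSet).mp (hsubN hcb))
    obtain ⟨r, hrt, hu0eq⟩ := hprojb u0 hu0
    have hv0c : v0 = c.1 := (proj_eq_of_ne hv0 hcnb).1
    rw [hu0eq, hv0c] at huv0
    have hc1 : ∀ j, j ≤ t → c.1 ≠ f j := by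
      intro j hj heq
      rcases Nat.lt_or_ge j 1 with h | h
      · exact hcnb (Subtype.ext (by rw [heq, show j = 0 by omega]))
      · exact c.2 (heq ▸ hmemK j h hj)
    set ψ : ℕ → ℕ := fun l => if r + 1 + l ≤ t then r+1+l else r+1+l-(t+1) with hψdef
    have hψle : ∀ l, l ≤ t-1 → ψ l ≤ t := by
      intro l hl
      simp only [hψdef]
      split_ifs <;> omega
    have hψne : ∀ l, l ≤ t-1 → ψ l ≠ r := by
      intro l hl
      simp only [hψdef]
      split_ifs <;> omega
    have hψinj : ∀ l, l ≤ t-1 → ∀ l', l' ≤ t-1 → ψ l = ψ l' → l = l' := by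
      intro l hl l' hl' heq
      simp only [hψdef] at heq
      split_ifs at heq <;> omega
    have hψsurj : ∀ s₀, s₀ ≤ t → s₀ ≠ r → ∃ l, l ≤ t-1 ∧ ψ l = s₀ := by
      intro s₀ hs hsr
      rcases Nat.lt_or_ge r s₀ with h | h
      · refine ⟨s₀ - r - 1, by omega, ?_⟩
        simp only [hψdef]
        rw [if_pos (by omega)]
        omega
      · refine ⟨s₀ + t - r, by omega, ?_⟩
        simp only [hψdef]
        rw [if_neg (by omega)]
        omega
    have hψadj : ∀ l, l ≤ t-2 → G.Adj (f (ψ l)) (f (ψ (l+1))) := by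
      intro l hl
      simp only [hψdef]
      by_cases h1 : r + 1 + l ≤ t
      · by_cases h2 : r + 1 + (l+1) ≤ t
        · rw [if_pos h1, if_pos h2, show r+1+(l+1) = (r+1+l)+1 by omega]
          exact altpath_adj' hpath (by omega)
        · rw [if_pos h1, if_neg h2, show r+1+l = t by omega, show r+1+(l+1)-(t+1) = 0 by omega]
          exact hchord.symm
      · rw [if_neg h1, if_neg (by omega : ¬(r+1+(l+1) ≤ t)),
          show r+1+(l+1)-(t+1) = (r+1+l-(t+1))+1 by omega]
        exact altpath_adj' hpath (by omega)
    set Nl : Set (Sym2 V) := {e | ∃ x y : {v : V // v ∉ K},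
      s(x,y) ∈ N' ∧ x ≠ b ∧ y ≠ b ∧ e = s(x.1, y.1)} with hNldef
    set Cyc : Set (Sym2 V) := {e | ∃ l, 2*l+1 ≤ t-1 ∧ e = s(f (ψ (2*l)), f (ψ (2*l+1)))} with hCycdef
    set N : Set (Sym2 V) := insert s(f r, c.1) (Nl ∪ Cyc) with hNdef
    have hNladj : ∀ x y : {v : V // v ∉ K}, s(x,y) ∈ N' → x ≠ b → y ≠ b → G.Adj x.1 y.1 := by
      intro x y hxy hxb hyb
      obtain ⟨-, u', v', huv', hu', hv'⟩ := CG_adj.mp (((CG G K b).mem_edgeSet).mp (hsubN hxy))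
      obtain ⟨hu'e, -⟩ := proj_eq_of_ne hu' hxb
      obtain ⟨hv'e, -⟩ := proj_eq_of_ne hv' hyb
      rwa [hu'e, hv'e] at huv'
    have hNsub : N ⊆ G.edgeSet := by
      intro e he
      rcases Set.mem_insert_iff.mp he with rfl | he
      · exact (G.mem_edgeSet).mpr huv0
      · rcases he with ⟨x, y, hxy, hxb, hyb, rfl⟩ | ⟨l, hl, rfl⟩
        · exact (G.mem_edgeSet).mpr (hNladj x y hxy hxb hyb)
        · exact (G.mem_edgeSet).mpr (hψadj (2*l) (by omega))
    have hexNl : ∀ v : V, ∃! w : V, s(v,w) ∈ N := by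
      intro v
      by_cases hvB : ∃ j, j ≤ t ∧ v = f j
      · obtain ⟨s₀, hs₀, rfl⟩ := hvB
        by_cases hs₀r : s₀ = r
        · subst hs₀r
          refine ⟨c.1, Set.mem_insert _ _, ?_⟩
          intro w hw
          rcases Set.mem_insert_iff.mp hw with heq | hw
          · rcases Sym2.eq_iff.mp heq with ⟨-, h2⟩ | ⟨h1, -⟩
            · exact h2
            · exact absurd h1.symm (hc1 s₀ hs₀)
          · exfalso
            rcases hw with ⟨x, y, hxy, hxb, hyb, heq⟩ | ⟨l, hl, heq⟩
            · rcases Sym2.eq_iff.mp heq with ⟨h1, -⟩ | ⟨h1, -⟩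
              · exact hblossom_ne x hxb s₀ hs₀ h1.symm
              · exact hblossom_ne y hyb s₀ hs₀ h1.symm
            · rcases Sym2.eq_iff.mp heq with ⟨h1, -⟩ | ⟨h1, -⟩
              · have h3 : s₀ = ψ (2*l) :=
                  hinj s₀ (by omega) (ψ (2*l)) (by have := hψle (2*l) (by omega); omega) h1
                exact hψne (2*l) (by omega) h3.symm
              · have h3 : s₀ = ψ (2*l+1) :=
                  hinj s₀ (by omega) (ψ (2*l+1)) (by have := hψle (2*l+1) (by omega); omega) h1
                exact hψne (2*l+1) (by omega) h3.symm
        · obtain ⟨l0, hl0, hl0eq⟩ := hψsurj s₀ hs₀ hs₀r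
          have huniqCyc : ∀ w, s(f s₀, w) ∈ N →
              (l0 % 2 = 0 → w = f (ψ (l0+1))) ∧ (l0 % 2 = 1 → w = f (ψ (l0-1))) := by
            intro w hw
            rcases Set.mem_insert_iff.mp hw with heq | hw
            · exfalso
              rcases Sym2.eq_iff.mp heq with ⟨h1, -⟩ | ⟨h1, -⟩
              · exact hs₀r (hinj s₀ (by omega) r (by omega) h1)
              · exact hc1 s₀ hs₀ h1.symm
            · rcases hw with ⟨x, y, hxy, hxb, hyb, heq⟩ | ⟨l, hl, heq⟩
              · exfalso
                rcases Sym2.eq_iff.mp heq with ⟨h1, -⟩ | ⟨h1, -⟩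
                · exact hblossom_ne x hxb s₀ hs₀ h1.symm
                · exact hblossom_ne y hyb s₀ hs₀ h1.symm
              · rcases Sym2.eq_iff.mp heq with ⟨h1, h2⟩ | ⟨h1, h2⟩
                · have h3 : s₀ = ψ (2*l) :=
                    hinj s₀ (by omega) (ψ (2*l)) (by have := hψle (2*l) (by omega); omega) h1
                  have h4 : 2*l = l0 := hψinj (2*l) (by omega) l0 (by omega) (by rw [← h3, hl0eq])
                  constructor
                  · intro hpar
                    rw [h2, show 2*l+1 = l0+1 by omega]
                  · intro hpar
                    omega
                · have h3 : s₀ = ψ (2*l+1) :=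
                    hinj s₀ (by omega) (ψ (2*l+1)) (by have := hψle (2*l+1) (by omega); omega) h1
                  have h4 : 2*l+1 = l0 := hψinj (2*l+1) (by omega) l0 (by omega) (by rw [← h3, hl0eq])
                  constructor
                  · intro hpar
                    omega
                  · intro hpar
                    rw [h2, show 2*l = l0-1 by omega]
          by_cases hpar : l0 % 2 = 0
          · refine ⟨f (ψ (l0+1)), Set.mem_insert_iff.mpr (Or.inr (Or.inr ⟨l0/2, by omega, ?_⟩)), ?_⟩
            · rw [show 2*(l0/2) = l0 by omega, hl0eq]
            · intro w hw
              exact (huniqCyc w hw).1 hpar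
          · refine ⟨f (ψ (l0-1)),
              Set.mem_insert_iff.mpr (Or.inr (Or.inr ⟨(l0-1)/2, by omega, ?_⟩)), ?_⟩
            · rw [show 2*((l0-1)/2) = l0-1 by omega, show l0-1+1 = l0 by omega, hl0eq,
                Sym2.eq_swap]
            · intro w hw
              exact (huniqCyc w hw).2 (by omega)
      · by_cases hvc : v = c.1
        · subst hvc
          refine ⟨f r, Set.mem_insert_iff.mpr (Or.inl Sym2.eq_swap), ?_⟩
          intro w hw
          rcases Set.mem_insert_iff.mp hw with heq | hw
          · rcases Sym2.eq_iff.mp heq with ⟨h1, -⟩ | ⟨-, h2⟩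
            · exact absurd h1 (hc1 r hrt)
            · exact h2
          · exfalso
            rcases hw with ⟨x, y, hxy, hxb, hyb, heq⟩ | ⟨l, hl, heq⟩
            · rcases Sym2.eq_iff.mp heq with ⟨h1, h2⟩ | ⟨h1, h2⟩
              · have hxc : x = c := Subtype.ext h1.symm
                rw [hxc] at hxy
                have hyc : y = ptn hexN c := ptn_eq hexN hxy
                rw [hcdef, ptn_ptn] at hyc
                exact hyb hyc
              · have hyc : y = c := Subtype.ext h1.symm
                rw [hyc] at hxy
                have hsw : s(c, x) ∈ N' := by rw [Sym2.eq_swap]; exact hxy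
                have hxc : x = ptn hexN c := ptn_eq hexN hsw
                rw [hcdef, ptn_ptn] at hxc
                exact hxb hxc
            · rcases Sym2.eq_iff.mp heq with ⟨h1, -⟩ | ⟨h1, -⟩
              · exact hc1 (ψ (2*l)) (hψle _ (by omega)) h1
              · exact hc1 (ψ (2*l+1)) (hψle _ (by omega)) h1
        · have hvK : v ∉ K := by
            intro hm
            obtain ⟨j, hj1, hjt, hjeq⟩ := hm
            exact hvB ⟨j, hjt, hjeq⟩
          have hxb : (⟨v, hvK⟩ : {v : V // v ∉ K}) ≠ b :=
            fun hcon => hvB ⟨0, by omega, congrArg Subtype.val hcon⟩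
          set y : {v : V // v ∉ K} := ptn hexN ⟨v, hvK⟩ with hydef
          have hyN : s((⟨v, hvK⟩ : {v : V // v ∉ K}), y) ∈ N' := ptn_mem hexN _
          have hyb : y ≠ b := by
            intro hcon
            apply hvc
            have h5 : (⟨v, hvK⟩ : {v : V // v ∉ K}) = ptn hexN b := by
              rw [← ptn_ptn hexN (⟨v, hvK⟩ : {v : V // v ∉ K}), ← hydef, hcon]
            rw [← hcdef] at h5
            exact congrArg Subtype.val h5
          refine ⟨y.1,
            Set.mem_insert_iff.mpr (Or.inr (Or.inl ⟨⟨v, hvK⟩, y, hyN, hxb, hyb, rfl⟩)), ?_⟩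
          intro w hw
          rcases Set.mem_insert_iff.mp hw with heq | hw
          · exfalso
            rcases Sym2.eq_iff.mp heq with ⟨h1, -⟩ | ⟨h1, -⟩
            · exact hvB ⟨r, hrt, h1⟩
            · exact hvc h1
          · rcases hw with ⟨x', y', hxy', hxb', hyb', heq⟩ | ⟨l, hl, heq⟩
            · rcases Sym2.eq_iff.mp heq with ⟨h1, h2⟩ | ⟨h1, h2⟩
              · have hx'v : x' = ⟨v, hvK⟩ := Subtype.ext h1.symm
                rw [hx'v] at hxy'
                have h6 : y' = y := by rw [hydef]; exact ptn_eq hexN hxy'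
                rw [h2, h6]
              · have hy'v : y' = ⟨v, hvK⟩ := Subtype.ext h1.symm
                rw [hy'v] at hxy'
                have hsw : s((⟨v, hvK⟩ : {v : V // v ∉ K}), x') ∈ N' := by
                  rw [Sym2.eq_swap]
                  exact hxy'
                have h6 : x' = y := by rw [hydef]; exact ptn_eq hexN hsw
                rw [h2, h6]
            · exfalso
              rcases Sym2.eq_iff.mp heq with ⟨h1, -⟩ | ⟨h1, -⟩
              · exact hvB ⟨ψ (2*l), hψle _ (by omega), h1⟩
              · exact hvB ⟨ψ (2*l+1), hψle _ (by omega), h1⟩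
    have hNM : N = M := huniq N (pm_intro hNsub hexNl)
    have hrcM : s(f r, c.1) ∈ M := by
      rw [← hNM]
      exact Set.mem_insert _ _
    have hceq : c.1 = ptn hex (f r) := ptn_eq hex hrcM
    have hrt2 : r = t := by
      by_contra hne
      by_cases hr2 : r % 2 = 0
      · rw [hptnf r (by omega) hr2] at hceq
        exact hc1 (r+1) (by omega) hceq
      · rw [hptnf' r (by omega) (by omega)] at hceq
        exact hc1 (r-1) (by omega) hceq
    have hcws : c = ws := by
      apply Subtype.ext
      rw [hceq, hrt2, hptnf t (by omega) hteven]
    have hsubN'M' : N' ⊆ M' := by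
      intro e' he'
      induction e' using Sym2.ind with
      | _ x y =>
        by_cases hxb : x = b
        · subst hxb
          have h6 : y = c := by
            rw [hcdef]
            exact ptn_eq hexN he'
          rw [h6, hcws]
          exact Set.mem_insert _ _
        · by_cases hyb : y = b
          · subst hyb
            have hsw : s(b, x) ∈ N' := by
              rw [Sym2.eq_swap]
              exact he'
            have h6 : x = c := by
              rw [hcdef]
              exact ptn_eq hexN hsw
            rw [h6, hcws]
            exact Set.mem_insert_iff.mpr (Or.inl Sym2.eq_swap)
          · have hxyM : s(x.1, y.1) ∈ M := by
              rw [← hNM]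
              exact Set.mem_insert_iff.mpr (Or.inr (Or.inl ⟨x, y, he', hxb, hyb, rfl⟩))
            have hbwsN : s(ws, b) ∈ N' := by
              rw [Sym2.eq_swap, ← hcws]
              exact hcb
            have hx1 : ∀ j, j ≤ t+1 → x.1 ≠ f j := by
              intro j hj heq
              rcases Nat.lt_or_ge j (t+1) with h | h
              · exact hblossom_ne x hxb j (by omega) heq
              · have hxws : x = ws := Subtype.ext (by rw [heq, show j = t+1 by omega])
                rw [hxws] at he'
                have h5 : b = ptn hexN ws := ptn_eq hexN hbwsN
                have h6 : y = ptn hexN ws := ptn_eq hexN he'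
                exact hyb (h6.trans h5.symm)
            have hy1 : ∀ j, j ≤ t+1 → y.1 ≠ f j := by
              intro j hj heq
              rcases Nat.lt_or_ge j (t+1) with h | h
              · exact hblossom_ne y hyb j (by omega) heq
              · have hyws : y = ws := Subtype.ext (by rw [heq, show j = t+1 by omega])
                rw [hyws] at he'
                have hsw : s(ws, x) ∈ N' := by
                  rw [Sym2.eq_swap]
                  exact he'
                have h5 : b = ptn hexN ws := ptn_eq hexN hbwsN
                have h6 : x = ptn hexN ws := ptn_eq hexN hsw
                exact hxb (h6.trans h5.symm)
            exact Set.mem_insert_iff.mpr (Or.inr ⟨x, y, hxyM, hx1, hy1, rfl⟩)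
    exact pm_eq_of_subset hexN (hex_of hM'pm) hsubN'M'
  have hG' : (CG G K b).Connected := by
    haveI : Nonempty {v : V // v ∉ K} := ⟨b⟩
    refine SimpleGraph.Connected.mk ?_
    intro x y
    have := CG_reachable (K := K) (b := b) (hG.preconnected x.1 y.1)
    rwa [proj_val, proj_val] at this
  have hcard : Fintype.card {v : V // v ∉ K} < Fintype.card V := by
    refine Fintype.card_subtype_lt (x := f 1) ?_
    simp only [not_not]
    exact hmemK 1 le_rfl (by omega)
  obtain ⟨e', he'M', he'b⟩ := IH _ (CG G K b) M' hG' hM'pm hM'uniq hcard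
  rcases Set.mem_insert_iff.mp he'M' with rfl | ⟨x, y, hxyM, hx1, hy1, rfl⟩
  · -- lift the special edge
    refine ⟨s(f t, f (t+1)), altpath_mat' hpath hteven htk, ?_⟩
    refine bridge_lift (K := K) (b := b) (altpath_adj' hpath htk) ?_ ?_
    · rwa [proj_mem (hmemK t (by omega) le_rfl), proj_not_mem hft1K]
    · intro u v huv hne hcon
      rw [proj_mem (hmemK t (by omega) le_rfl), proj_not_mem hft1K] at hcon
      rcases Sym2.eq_iff.mp hcon with ⟨h1, h2⟩ | ⟨h1, h2⟩
      · obtain ⟨r, hrt, hueq⟩ := hprojb u h1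
        have hveq : v = f (t+1) := (proj_eq_of_ne h2 (fun hcon2 => hbws hcon2.symm)).1
        rw [hueq, hveq] at huv
        by_cases hr : r = t
        · rw [hueq, hveq, hr] at hne
          exact hne rfl
        · exact hnopre r hrt hr huv
      · obtain ⟨r, hrt, hveq⟩ := hprojb v h2
        have hueq : u = f (t+1) := (proj_eq_of_ne h1 (fun hcon2 => hbws hcon2.symm)).1
        rw [hueq, hveq] at huv
        by_cases hr : r = t
        · rw [hueq, hveq, hr, Sym2.eq_swap] at hne
          exact hne rfl
        · exact hnopre r hrt hr huv.symm
  · -- lift an ordinary edge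
    have hxb : x ≠ b := fun hcon => hx1 0 (by omega) (congrArg Subtype.val hcon)
    have hyb : y ≠ b := fun hcon => hy1 0 (by omega) (congrArg Subtype.val hcon)
    refine ⟨s(x.1, y.1), hxyM, ?_⟩
    refine bridge_lift (K := K) (b := b) ((G.mem_edgeSet).mp (hsub hxyM)) ?_ ?_
    · rwa [proj_val, proj_val]
    · intro u v huv hne hcon
      rw [proj_val, proj_val] at hcon
      rcases Sym2.eq_iff.mp hcon with ⟨h1, h2⟩ | ⟨h1, h2⟩
      · obtain ⟨hu, -⟩ := proj_eq_of_ne h1 hxb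
        obtain ⟨hv, -⟩ := proj_eq_of_ne h2 hyb
        rw [hu, hv] at hne
        exact hne rfl
      · obtain ⟨hu, -⟩ := proj_eq_of_ne h1 hyb
        obtain ⟨hv, -⟩ := proj_eq_of_ne h2 hxb
        rw [hu, hv, Sym2.eq_swap] at hne
        exact hne rfl

end Hard

lemma aux : ∀ (n : ℕ) (W : Type*) [Fintype W] (G : SimpleGraph W) (M : Set (Sym2 W)),
    G.Connected → G.IsPerfectMatchingOn M →
    (∀ M' : Set (Sym2 W), G.IsPerfectMatchingOn M' → M' = M) →
    Fintype.card W ≤ n → ∃ e ∈ M, G.IsBridge e := by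
  intro n
  induction n with
  | zero =>
    intro W _ G M hG hM huniq hcard
    haveI : Nonempty W := hG.nonempty
    have := Fintype.card_pos (α := W)
    omega
  | succ n ih =>
    intro W _ G M hG hM huniq hcard
    classical
    haveI : Nonempty W := hG.nonempty
    have hsub := hM.1
    have hex := hex_of hM
    set P : ℕ → Prop := fun k => ∃ f, IsAltPath G hex k f with hP
    have hP0 : P 0 := altpath_exists hsub
    have hbound : ∀ k, P k → k ≤ Fintype.card W := by
      rintro k ⟨f, hf⟩
      have := altpath_card hf
      omega
    set k := Nat.findGreatest P (Fintype.card W) with hk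
    have hPk : P k := Nat.findGreatest_spec (Nat.zero_le _) hP0
    obtain ⟨f, hf⟩ := hPk
    have hmax : ∀ w, G.Adj (f 0) w → ∃ j, j ≤ 2*k+1 ∧ w = f j := by
      intro w hw
      by_contra hcon
      push_neg at hcon
      obtain ⟨g, hg⟩ := altpath_extend hsub hf hw (fun j hj => hcon j hj)
      have h1 : k + 1 ≤ Fintype.card W := hbound (k+1) ⟨g, hg⟩
      have h2 : k + 1 ≤ k := Nat.le_findGreatest h1 ⟨g, hg⟩
      omega
    by_cases hdeg : ∀ w, G.Adj (f 0) w → w = f 1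
    · have hm01 : s(f 0, f 1) ∈ M := by
        have := altpath_mat' hf (x := 0) (by omega) (by omega)
        simpa using this
      exact ⟨s(f 0, f 1), hm01, pendant_bridge (hf.2.1 0 (by omega)) hdeg⟩
    · push_neg at hdeg
      obtain ⟨w, hw, hwne⟩ := hdeg
      obtain ⟨j, hj, rfl⟩ := hmax w hw
      have hj0 : j ≠ 0 := by
        intro h
        rw [h] at hw
        exact hw.ne rfl
      have hj1 : j ≠ 1 := fun h => hwne (by rw [h])
      by_cases hjodd : j % 2 = 1
      · exact (chordC hsub huniq hf (p := 0) (s := j) (by omega) hj (by omega) hjodd hw.symm).elim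
      · have hjt : j % 2 = 0 := by omega
        have hjk : j + 1 ≤ 2*k+1 := by omega
        have hnopre : ∀ r, r ≤ j → r ≠ j → ¬ G.Adj (f r) (f (j+1)) := by
          intro r hr hrne hadj
          by_cases hr2 : r % 2 = 0
          · exact chordC hsub huniq hf (p := r) (s := j+1) (by omega) (by omega) hr2 (by omega)
              hadj.symm
          · exact chordD hsub huniq hf (by omega) (by omega) hjt hjk hw hadj.symm
        exact hard_case hsub hex huniq hG hf (by omega) hjt hjk hw hnopre
          (fun X _ G' M'' hG' hM'' huniq'' hcard' => ih X G' M'' hG' hM'' huniq'' (by omega))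

end Kotzig

/-- A finite connected simple graph with a unique perfect matching has a bridge. -/
theorem exists_bridge_of_unique_matching {V : Type*} [Fintype V] (G : SimpleGraph V)
    (hG : G.Connected) (M : Set (Sym2 V)) (hM : G.IsPerfectMatchingOn M)
    (huniq : ∀ M' : Set (Sym2 V), G.IsPerfectMatchingOn M' → M' = M) :
    ∃ e : Sym2 V, G.IsBridge e := by
  obtain ⟨e, -, hbr⟩ := Kotzig.aux (Fintype.card V) V G M hG hM huniq le_rfl
  exact ⟨e, hbr⟩
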